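/- With f = √(αβ) as above and M₀ the matrix of dd^c f(·, i·), every vector v orthogonal (for the standard inner product on ℝ²ⁿ) to both v₀ and w₀ = −J₀v₀ satisfies M₀ v = ((α+β)/√(αβ)) v, on the complement of L₁ ∪ L₂. -/

import Mathlib

noncomputable section

/-- ℂⁿ as a real inner product space. -/
abbrev Cn (n : ℕ) := EuclideanSpace ℂ (Fin n)

/-- α(x,y) = Σ xᵢ², the squared distance to L₁ = iℝⁿ. -/
def alph (n : ℕ) (z : Cn n) : ℝ := ∑ i, (z i).re ^ 2

/-- β(x,y) = Σ_{i≤k} xᵢ² + Σ_{i>k} yᵢ² (0-based: i < k resp. k ≤ i). -/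
def bet (n k : ℕ) (z : Cn n) : ℝ :=
  ∑ i : Fin n, if (i : ℕ) < k then (z i).re ^ 2 else (z i).im ^ 2

/-- The Levi quadratic form of a real function `f` at `z` on the (real) vector `v`:
`dd^c f(v, iv) = Hess f(v,v) + Hess f(iv,iv)`.  Weak plurisubharmonicity of `f` at `z`
(positive semidefiniteness of the complex Hessian `(∂²f/∂zᵢ∂z̄ⱼ)`) is equivalent to
`0 ≤ levi n f z v` for all `v`. -/
def levi (n : ℕ) (f : Cn n → ℝ) (z v : Cn n) : ℝ :=
  iteratedFDeriv ℝ 2 f z ![v, v] + iteratedFDeriv ℝ 2 f z ![Complex.I • v, Complex.I • v]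

/-- The symmetric bilinear form `dd^c f(·, i·)(v,w) = Hess f(v,w) + Hess f(iv,iw)`,
whose matrix in the standard real basis of ℝ²ⁿ is `M₀`. -/
def leviB (n : ℕ) (f : Cn n → ℝ) (z v w : Cn n) : ℝ :=
  iteratedFDeriv ℝ 2 f z ![v, w] + iteratedFDeriv ℝ 2 f z ![Complex.I • v, Complex.I • w]
/-- Σ_{i ≤ k} xᵢ² (0-based: i < k). -/
def sxk (n k : ℕ) (z : Cn n) : ℝ := ∑ i : Fin n, if (i : ℕ) < k then (z i).re ^ 2 else 0

/-- v₀ = Σᵢ (α yᵢ δ_{i>k} ∂/∂xᵢ + (β − α δ_{i≤k}) xᵢ ∂/∂yᵢ), as a vector of ℂⁿ = ℝ²ⁿ. -/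
def v0 (n k : ℕ) (z : Cn n) : Cn n :=
  (EuclideanSpace.equiv (Fin n) ℂ).symm fun i =>
    ((if k ≤ (i : ℕ) then alph n z * (z i).im else 0 : ℝ) : ℂ) +
      (((bet n k z - if (i : ℕ) < k then alph n z else 0) * (z i).re : ℝ) : ℂ) * Complex.I

/-- v₁ = Σᵢ (α yᵢ δ_{i>k} ∂/∂xᵢ − (β + α δ_{i≤k}) xᵢ ∂/∂yᵢ). -/
def v1 (n k : ℕ) (z : Cn n) : Cn n :=
  (EuclideanSpace.equiv (Fin n) ℂ).symm fun i =>
    ((if k ≤ (i : ℕ) then alph n z * (z i).im else 0 : ℝ) : ℂ) -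
      (((bet n k z + if (i : ℕ) < k then alph n z else 0) * (z i).re : ℝ) : ℂ) * Complex.I
-- coordinate functionals
def Xc (n : ℕ) (i : Fin n) : Cn n →L[ℝ] ℝ :=
  Complex.reCLM.comp ((EuclideanSpace.proj i).restrictScalars ℝ)

def Yc (n : ℕ) (i : Fin n) : Cn n →L[ℝ] ℝ :=
  Complex.imCLM.comp ((EuclideanSpace.proj i).restrictScalars ℝ)

@[simp] lemma Xc_apply (n : ℕ) (i : Fin n) (v : Cn n) : Xc n i v = (v i).re := rfl
@[simp] lemma Yc_apply (n : ℕ) (i : Fin n) (v : Cn n) : Yc n i v = (v i).im := rfl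

def Da (n : ℕ) : Cn n →L[ℝ] (Cn n →L[ℝ] ℝ) := ∑ i, (Xc n i).smulRight (Xc n i)

def Db (n k : ℕ) : Cn n →L[ℝ] (Cn n →L[ℝ] ℝ) :=
  ∑ i : Fin n, if (i : ℕ) < k then (Xc n i).smulRight (Xc n i)
    else (Yc n i).smulRight (Yc n i)

lemma Da_apply (n : ℕ) (q v : Cn n) : Da n q v = ∑ i, (q i).re * (v i).re := by
  simp [Da, ContinuousLinearMap.sum_apply]

lemma Db_apply (n k : ℕ) (q v : Cn n) :
    Db n k q v = ∑ i : Fin n,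
      if (i : ℕ) < k then (q i).re * (v i).re else (q i).im * (v i).im := by
  rw [Db]
  simp only [ContinuousLinearMap.sum_apply]
  refine Finset.sum_congr rfl fun i _ => ?_
  split_ifs <;> simp

lemma hasFDerivAt_alph (n : ℕ) (q : Cn n) :
    HasFDerivAt (alph n) ((2:ℝ) • Da n q) q := by
  have h : ∀ i : Fin n, HasFDerivAt (fun p : Cn n => (Xc n i p) ^ 2)
      ((2 * Xc n i q) • (Xc n i)) q := by
    intro i
    simpa [pow_two, two_mul, add_smul] using
      ((Xc n i).hasFDerivAt (x := q)).fun_mul ((Xc n i).hasFDerivAt (x := q))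
  have hs := HasFDerivAt.fun_sum (fun i (_ : i ∈ (Finset.univ : Finset (Fin n))) => h i)
  have : HasFDerivAt (alph n) (∑ i, (2 * Xc n i q) • (Xc n i)) q := by
    exact hs
  convert this using 1
  ext w
  simp [Da_apply, Finset.mul_sum, ContinuousLinearMap.sum_apply]
  ring_nf

lemma hasFDerivAt_bet (n k : ℕ) (q : Cn n) :
    HasFDerivAt (bet n k) ((2:ℝ) • Db n k q) q := by
  have h : ∀ i : Fin n, HasFDerivAt
      (fun p : Cn n => if (i : ℕ) < k then (Xc n i p) ^ 2 else (Yc n i p) ^ 2)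
      (if (i : ℕ) < k then (2 * Xc n i q) • (Xc n i) else (2 * Yc n i q) • (Yc n i)) q := by
    intro i
    split_ifs
    · simpa [pow_two, two_mul, add_smul] using
        ((Xc n i).hasFDerivAt (x := q)).fun_mul ((Xc n i).hasFDerivAt (x := q))
    · simpa [pow_two, two_mul, add_smul] using
        ((Yc n i).hasFDerivAt (x := q)).fun_mul ((Yc n i).hasFDerivAt (x := q))
  have hs := HasFDerivAt.fun_sum (fun i (_ : i ∈ (Finset.univ : Finset (Fin n))) => h i)
  have : HasFDerivAt (bet n k)
      (∑ i : Fin n, if (i : ℕ) < k then (2 * Xc n i q) • (Xc n i)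
        else (2 * Yc n i q) • (Yc n i)) q := by
    exact hs
  convert this using 1
  ext w
  rw [Db]
  simp only [ContinuousLinearMap.sum_apply, ContinuousLinearMap.smul_apply, smul_eq_mul,
    ContinuousLinearMap.smulRight_apply, Finset.smul_sum]
  refine Finset.sum_congr rfl fun i _ => ?_
  split_ifs <;> simp <;> ring

def F1 (n k : ℕ) (q : Cn n) : Cn n →L[ℝ] ℝ :=
  (Real.sqrt (alph n q * bet n k q))⁻¹ •
    ((bet n k q) • Da n q + (alph n q) • Db n k q)

lemma hasFDerivAt_g (n k : ℕ) (q : Cn n) :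
    HasFDerivAt (fun p => alph n p * bet n k p)
      ((alph n q) • ((2:ℝ) • Db n k q) + (bet n k q) • ((2:ℝ) • Da n q)) q :=
  (hasFDerivAt_alph n q).mul (hasFDerivAt_bet n k q)

lemma hasFDerivAt_f (n k : ℕ) (q : Cn n) (hq : 0 < alph n q * bet n k q) :
    HasFDerivAt (fun p => Real.sqrt (alph n p * bet n k p)) (F1 n k q) q := by
  have hs : Real.sqrt (alph n q * bet n k q) ≠ 0 :=
    ne_of_gt (Real.sqrt_pos.mpr hq)
  have h := (hasFDerivAt_g n k q).sqrt hq.ne'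
  refine h.congr_fderiv ?_
  ext w
  simp only [F1, ContinuousLinearMap.smul_apply, ContinuousLinearMap.add_apply,
    smul_eq_mul]
  field_simp
  ring

lemma fderiv_F1_apply (n k : ℕ) (z : Cn n) (hz : 0 < alph n z * bet n k z) (v w : Cn n) :
    fderiv ℝ (F1 n k) z v w =
      -(((alph n z * (2 * Db n k z v) + bet n k z * (2 * Da n z v)) /
          (2 * Real.sqrt (alph n z * bet n k z) * (alph n z * bet n k z))) *
        (bet n k z * Da n z w + alph n z * Db n k z w)) +
      (Real.sqrt (alph n z * bet n k z))⁻¹ *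
        ((2 * Db n k z v) * Da n z w + bet n k z * Da n v w +
         (2 * Da n z v) * Db n k z w + alph n z * Db n k v w) := by
  have hsq : Real.sqrt (alph n z * bet n k z) ≠ 0 := ne_of_gt (Real.sqrt_pos.mpr hz)
  have hc : HasFDerivAt (fun q => (Real.sqrt (alph n q * bet n k q))⁻¹) _ z :=
    (hasDerivAt_inv hsq).comp_hasFDerivAt z
      (HasFDerivAt.sqrt (hasFDerivAt_g n k z) hz.ne')
  have hL : HasFDerivAt (fun q => (bet n k q) • Da n q + (alph n q) • Db n k q) _ z :=
    ((hasFDerivAt_bet n k z).smul ((Da n).hasFDerivAt (x := z))).add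
      ((hasFDerivAt_alph n z).smul ((Db n k).hasFDerivAt (x := z)))
  have hF : HasFDerivAt (F1 n k) _ z := hc.smul hL
  rw [hF.fderiv]
  simp only [ContinuousLinearMap.add_apply, ContinuousLinearMap.smul_apply,
    ContinuousLinearMap.smulRight_apply, ContinuousLinearMap.coe_smul', Pi.smul_apply,
    smul_eq_mul, Pi.add_apply, ContinuousLinearMap.coe_comp', Function.comp_apply,
    one_div]
  have h2 : Real.sqrt (alph n z * bet n k z) ^ 2 = alph n z * bet n k z :=
    Real.sq_sqrt hz.le
  rw [h2]
  ring_nf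

lemma scalar_key (a b s Av Bv Aw Bw p q : ℝ) (ha : a ≠ 0) (hb : b ≠ 0) (hs : s ≠ 0)
    (h : a * Bv = b * Av) :
    -(((a * (2 * Bv) + b * (2 * Av)) / (2 * s * (a * b))) * (b * Aw + a * Bw)) +
      s⁻¹ * ((2 * Bv) * Aw + b * p + (2 * Av) * Bw + a * q) =
    s⁻¹ * (b * p + a * q) := by
  field_simp
  linear_combination (b * Aw - a * Bw) * h

lemma fderiv_fderiv_f (n k : ℕ) (z : Cn n) (hz : 0 < alph n z * bet n k z) :
    fderiv ℝ (fderiv ℝ (fun q => Real.sqrt (alph n q * bet n k q))) z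
      = fderiv ℝ (F1 n k) z := by
  apply Filter.EventuallyEq.fderiv_eq
  have hcont : ContinuousAt (fun q => alph n q * bet n k q) z :=
    (hasFDerivAt_g n k z).differentiableAt.continuousAt
  filter_upwards [hcont.preimage_mem_nhds (Ioi_mem_nhds hz)] with q hq
  exact (hasFDerivAt_f n k q hq).fderiv

lemma inner_coords (n : ℕ) (v w : Cn n) :
    (inner ℝ v w : ℝ) = ∑ i, ((v i).re * (w i).re + (v i).im * (w i).im) := by
  rw [PiLp.inner_apply]
  simp only [Complex.inner, Complex.mul_re, Complex.conj_re, Complex.conj_im]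
  exact Finset.sum_congr rfl fun i _ => by ring

lemma v0_re (n k : ℕ) (z : Cn n) (i : Fin n) :
    (v0 n k z i).re = if k ≤ (i : ℕ) then alph n z * (z i).im else 0 := by
  simp [v0]

lemma v0_im (n k : ℕ) (z : Cn n) (i : Fin n) :
    (v0 n k z i).im = (bet n k z - if (i : ℕ) < k then alph n z else 0) * (z i).re := by
  simp [v0]

lemma Ismul_coord (n : ℕ) (v : Cn n) (i : Fin n) :
    ((Complex.I • v : Cn n) i) = Complex.I * v i := rfl

lemma ortho1 (n k : ℕ) (z v : Cn n) :
    alph n z * Db n k z (Complex.I • v) - bet n k z * Da n z (Complex.I • v)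
      = (inner ℝ v (v0 n k z) : ℝ) := by
  rw [inner_coords, Da_apply, Db_apply, Finset.mul_sum, Finset.mul_sum,
    ← Finset.sum_sub_distrib]
  refine Finset.sum_congr rfl fun i _ => ?_
  rw [Ismul_coord, v0_re, v0_im]
  simp only [Complex.mul_re, Complex.mul_im, Complex.I_re, Complex.I_im]
  split_ifs <;> first | ring1 | (exfalso; omega)

lemma ortho2 (n k : ℕ) (z v : Cn n) :
    bet n k z * Da n z v - alph n z * Db n k z v
      = (inner ℝ v (-(Complex.I • v0 n k z)) : ℝ) := by
  rw [inner_coords, Da_apply, Db_apply, Finset.mul_sum, Finset.mul_sum,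
    ← Finset.sum_sub_distrib]
  refine Finset.sum_congr rfl fun i _ => ?_
  have hc : ((-(Complex.I • v0 n k z) : Cn n) i) = -(Complex.I * v0 n k z i) := rfl
  rw [hc]
  simp only [Complex.neg_re, Complex.neg_im, Complex.mul_re, Complex.mul_im,
    Complex.I_re, Complex.I_im, v0_re, v0_im]
  split_ifs <;> first | ring1 | (exfalso; omega)

lemma sumDa (n : ℕ) (v w : Cn n) :
    Da n v w + Da n (Complex.I • v) (Complex.I • w) = (inner ℝ v w : ℝ) := by
  rw [inner_coords, Da_apply, Da_apply, ← Finset.sum_add_distrib]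
  refine Finset.sum_congr rfl fun i _ => ?_
  rw [Ismul_coord, Ismul_coord]
  simp only [Complex.mul_re, Complex.I_re, Complex.I_im]
  ring

lemma sumDb (n k : ℕ) (v w : Cn n) :
    Db n k v w + Db n k (Complex.I • v) (Complex.I • w) = (inner ℝ v w : ℝ) := by
  rw [inner_coords, Db_apply, Db_apply, ← Finset.sum_add_distrib]
  refine Finset.sum_congr rfl fun i _ => ?_
  rw [Ismul_coord, Ismul_coord]
  simp only [Complex.mul_re, Complex.mul_im, Complex.I_re, Complex.I_im]
  split_ifs <;> ring

/-- outside L₁ ∪ L₂, every vector orthogonal to v₀ and w₀ = −J₀v₀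
satisfies M₀ v = ((α+β)/√(αβ)) v, where M₀ is the matrix of dd^c √(αβ)(·, i·). -/
theorem orthogonal_eigenspace (n k : ℕ) (hk : k ≤ n) (z : Cn n)
    (h1 : alph n z ≠ 0) (h2 : bet n k z ≠ 0) (v : Cn n)
    (hv0 : (inner ℝ v (v0 n k z) : ℝ) = 0)
    (hw0 : (inner ℝ v (-(Complex.I • v0 n k z)) : ℝ) = 0) (w : Cn n) :
    leviB n (fun q => Real.sqrt (alph n q * bet n k q)) z v w =
      ((alph n z + bet n k z) / Real.sqrt (alph n z * bet n k z)) * (inner ℝ v w : ℝ) := by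
  have ha : 0 < alph n z :=
    lt_of_le_of_ne (Finset.sum_nonneg fun i _ => sq_nonneg _) (Ne.symm h1)
  have hb : 0 < bet n k z := by
    refine lt_of_le_of_ne (Finset.sum_nonneg fun i _ => ?_) (Ne.symm h2)
    split_ifs <;> exact sq_nonneg _
  have hz : 0 < alph n z * bet n k z := mul_pos ha hb
  have hs : Real.sqrt (alph n z * bet n k z) ≠ 0 := ne_of_gt (Real.sqrt_pos.mpr hz)
  have hOrt2 : alph n z * Db n k z v = bet n k z * Da n z v := by
    have h := ortho2 n k z v
    rw [hw0] at h
    linarith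
  have hOrt1 : alph n z * Db n k z (Complex.I • v) =
      bet n k z * Da n z (Complex.I • v) := by
    have h := ortho1 n k z v
    rw [hv0] at h
    linarith
  have hp := sumDa n v w
  have hq := sumDb n k v w
  rw [leviB, iteratedFDeriv_two_apply, iteratedFDeriv_two_apply]
  simp only [Matrix.cons_val_zero, Matrix.cons_val_one, Matrix.head_cons]
  rw [fderiv_fderiv_f n k z hz, fderiv_F1_apply n k z hz v w,
    fderiv_F1_apply n k z hz (Complex.I • v) (Complex.I • w),
    scalar_key _ _ _ _ _ _ _ _ _ ha.ne' hb.ne' hs hOrt2,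
    scalar_key _ _ _ _ _ _ _ _ _ ha.ne' hb.ne' hs hOrt1]
  linear_combination ((Real.sqrt (alph n z * bet n k z))⁻¹ * bet n k z) * hp +
    ((Real.sqrt (alph n z * bet n k z))⁻¹ * alph n z) * hq
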